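/- If L is a context-free language and R is a regular language such that L ∩ R is not context-free, then a contradiction follows; consequently, any language L whose intersection with the regular language { u^n 0^m h } equals the non-context-free language { u^n 0^m h : n ≥ 2^m − 1 } is itself not context-free. -/

import Mathlib

inductive Alph : Type
  | u | z | h
deriving DecidableEq

/-- The regular language { u^n 0^m h : n, m ≥ 0 } (with `Alph.z` playing the role of `0`). -/
def Lu0h : Language Alph :=
  {w | ∃ n m : ℕ, w = List.replicate n Alph.u ++ List.replicate m Alph.z ++ [Alph.h]}

/-- The language L' = { u^n 0^m h : n ≥ 2^m − 1 }. -/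
def Lcc' : Language Alph :=
  {w | ∃ n m : ℕ, w = List.replicate n Alph.u ++ List.replicate m Alph.z ++ [Alph.h] ∧ 2 ^ m - 1 ≤ n}

/-- n-fold repetition of a word. -/
def listPow {α : Type*} (l : List α) (n : ℕ) : List α := (List.replicate n l).flatten

namespace CFPump

variable {T : Type} {g : ContextFreeGrammar.{0} T}

open ContextFreeGrammar

lemma derives_append {x₁ x₂ y₁ y₂ : List (Symbol T g.NT)}
    (h1 : g.Derives x₁ y₁) (h2 : g.Derives x₂ y₂) :
    g.Derives (x₁ ++ x₂) (y₁ ++ y₂) :=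
  (h1.append_right x₂).trans (h2.append_left y₁)

mutual
inductive SDT (g : ContextFreeGrammar.{0} T) : Symbol T g.NT → List T → ℕ → Prop
  | term (t : T) : SDT g (Symbol.terminal t) [t] 1
  | node (r : ContextFreeRule T g.NT) (hr : r ∈ g.rules) {ws : List (List T)} {m : ℕ}
      (hc : SDTs g r.output ws m) : SDT g (Symbol.nonterminal r.input) ws.flatten (m + 1)

inductive SDTs (g : ContextFreeGrammar.{0} T) : List (Symbol T g.NT) → List (List T) → ℕ → Prop
  | nil : SDTs g [] [] 0
  | cons {s : Symbol T g.NT} {w : List T} {n : ℕ} {ss ws m}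
      (h : SDT g s w n) (hs : SDTs g ss ws m) : SDTs g (s :: ss) (w :: ws) (n + m)
end

lemma SDT.size_pos {s w n} (h : SDT g s w n) : 1 ≤ n := by cases h <;> omega

lemma SDTs_len : ∀ {ss : List (Symbol T g.NT)} {ws m}, SDTs g ss ws m → ws.length = ss.length := by
  intro ss
  induction ss with
  | nil => rintro ws m h; cases h; rfl
  | cons s ss ih => rintro ws m h; cases h with | cons h0 hs => simp [ih hs]

lemma SDTs_append : ∀ {ss₁ : List (Symbol T g.NT)} {ws₁ m₁ ss₂ ws₂ m₂},
    SDTs g ss₁ ws₁ m₁ → SDTs g ss₂ ws₂ m₂ → SDTs g (ss₁ ++ ss₂) (ws₁ ++ ws₂) (m₁ + m₂) := by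
  intro ss₁
  induction ss₁ with
  | nil => rintro ws₁ m₁ ss₂ ws₂ m₂ h1 h2; cases h1; simpa using h2
  | cons s ss ih =>
    rintro ws₁ m₁ ss₂ ws₂ m₂ h1 h2
    cases h1 with | cons h0 hs => simpa [add_assoc] using SDTs.cons h0 (ih hs h2)

lemma SDTs_append_inv {ss₁ ss₂ : List (Symbol T g.NT)} {ws m}
    (h : SDTs g (ss₁ ++ ss₂) ws m) :
    ∃ ws₁ ws₂ m₁ m₂, ws = ws₁ ++ ws₂ ∧ m = m₁ + m₂ ∧ SDTs g ss₁ ws₁ m₁ ∧ SDTs g ss₂ ws₂ m₂ := by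
  induction ss₁ generalizing ws m with
  | nil => exact ⟨[], ws, 0, m, by simp, by simp, SDTs.nil, by simpa using h⟩
  | cons s ss ih =>
    rw [List.cons_append] at h
    cases h with
    | cons h0 hs =>
      obtain ⟨ws₁, ws₂, m₁, m₂, rfl, rfl, ha, hb⟩ := ih hs
      exact ⟨_ :: ws₁, ws₂, _ + m₁, m₂, by simp, by omega, SDTs.cons h0 ha, hb⟩

lemma sdts_terminal (w : List T) :
    SDTs g (w.map Symbol.terminal) (w.map fun t => [t]) w.length := by
  induction w with
  | nil => exact SDTs.nil
  | cons t w ih => simpa [Nat.add_comm] using SDTs.cons (SDT.term t) ih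

/-- Completeness: derivations to terminal words give parse forests. -/
theorem sdts_of_derives {ss : List (Symbol T g.NT)} {w : List T}
    (h : g.Derives ss (w.map Symbol.terminal)) :
    ∃ ws m, w = ws.flatten ∧ SDTs g ss ws m := by
  induction h using Relation.ReflTransGen.head_induction_on with
  | refl =>
    refine ⟨w.map fun t => [t], w.length, ?_, sdts_terminal w⟩
    induction w with
    | nil => rfl
    | cons t w ih => simpa using ih
  | head hp _ ih =>
    obtain ⟨r, hr, hrw⟩ := hp
    obtain ⟨p, q, rfl, rfl⟩ := hrw.exists_parts
    obtain ⟨ws, m, rfl, hs⟩ := ih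
    rw [List.append_assoc] at hs
    obtain ⟨ws₁, ws', m₁, m', rfl, rfl, h1, h'⟩ := SDTs_append_inv hs
    obtain ⟨ws₂, ws₃, m₂, m₃, rfl, rfl, h2, h3⟩ := SDTs_append_inv h'
    refine ⟨ws₁ ++ [ws₂.flatten] ++ ws₃, m₁ + ((m₂ + 1) + m₃), by simp, ?_⟩
    rw [List.append_assoc, List.append_assoc]
    exact SDTs_append h1 (SDTs_append (by simpa using SDTs.cons (SDT.node r hr h2) SDTs.nil) h3)

/-- Soundness for forests, by strong induction on size. -/
theorem sdts_derives : ∀ m : ℕ, ∀ {ss : List (Symbol T g.NT)} {ws : List (List T)},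
    SDTs g ss ws m → g.Derives ss (ws.flatten.map Symbol.terminal) := by
  intro m
  induction m using Nat.strong_induction_on with
  | _ m ih =>
    intro ss ws h
    cases h with
    | nil => exact Derives.refl []
    | @cons s w n ss' ws' m' h0 hs =>
      have hn : 1 ≤ n := h0.size_pos
      have hd : g.Derives [s] (w.map Symbol.terminal) := by
        cases h0 with
        | term t => exact Derives.refl _
        | node r hr hc =>
          have : g.Derives r.output ((List.flatten _).map Symbol.terminal) :=
            ih _ (by omega) hc
          exact (Produces.single ⟨r, hr, ContextFreeRule.Rewrites.input_output⟩).trans this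
      have ht : g.Derives ss' (ws'.flatten.map Symbol.terminal) :=
        ih m' (by omega) hs
      simpa using derives_append hd ht

theorem sdt_derives {s w n} (h : SDT g s w n) : g.Derives [s] (w.map Symbol.terminal) := by
  have := sdts_derives (n + 0) (SDTs.cons h SDTs.nil)
  simpa using this

end CFPump

namespace CFPump

def listPow' {α : Type*} (l : List α) (n : ℕ) : List α := (List.replicate n l).flatten

lemma listPow'_zero {α : Type*} (l : List α) : listPow' l 0 = [] := rfl

lemma listPow'_succ {α : Type*} (l : List α) (n : ℕ) :
    listPow' l (n + 1) = l ++ listPow' l n := by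
  simp [listPow', List.replicate_succ]

lemma listPow'_succ' {α : Type*} (l : List α) (n : ℕ) :
    listPow' l (n + 1) = listPow' l n ++ l := by
  simp [listPow', List.replicate_succ']

lemma listPow'_one {α : Type*} (l : List α) : listPow' l 1 = l := by
  simp [listPow'_succ, listPow'_zero]

variable {T : Type} {g : ContextFreeGrammar.{0} T}
open ContextFreeGrammar

def Reach (g : ContextFreeGrammar.{0} T) (A : g.NT) (a : List T) (B : g.NT) (b : List T) : Prop :=
  g.Derives [Symbol.nonterminal A]
    (a.map Symbol.terminal ++ [Symbol.nonterminal B] ++ b.map Symbol.terminal)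

def PumpFound (g : ContextFreeGrammar.{0} T) (s : Symbol T g.NT) (w : List T) : Prop :=
  ∃ a v x y b : List T, w = a ++ v ++ x ++ y ++ b ∧ v ++ y ≠ [] ∧
    ∀ i : ℕ, g.Derives [s]
      ((a ++ listPow' v i ++ x ++ listPow' y i ++ b).map Symbol.terminal)

theorem core [DecidableEq g.NT] (lmax : ℕ) (hlr : ∀ r ∈ g.rules, r.output.length ≤ lmax)
    (NTS : Finset g.NT) (hNTS : ∀ r ∈ g.rules, r.input ∈ NTS) :
    ∀ m : ℕ, ∀ (A : g.NT) (w : List T) (F : Finset g.NT),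
      SDT g (Symbol.nonterminal A) w m →
      (∀ m', SDT g (Symbol.nonterminal A) w m' → m ≤ m') →
      A ∉ F →
      PumpFound g (Symbol.nonterminal A) w
      ∨ (∃ B ∈ F, ∃ a x b n, w = a ++ x ++ b ∧ Reach g A a B b ∧
            SDT g (Symbol.nonterminal B) x n ∧ n < m)
      ∨ w.length ≤ (max 1 lmax) ^ (NTS \ F).card := by
  classical
  set L := max 1 lmax with hL
  have hL1 : 1 ≤ L := le_max_left _ _
  intro m
  induction m using Nat.strong_induction_on with
  | _ m IH =>
  intro A w F hT hmin hAF
  cases hT with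
  | @node r hr ws m' hc =>
  have hAin : r.input ∈ NTS := hNTS r hr
  have hAe : r.input ∈ NTS \ F := Finset.mem_sdiff.mpr ⟨hAin, hAF⟩
  have he : 1 ≤ (NTS \ F).card := Finset.card_pos.mpr ⟨r.input, hAe⟩
  have hcard : (NTS \ insert r.input F).card = (NTS \ F).card - 1 := by
    rw [Finset.sdiff_insert, Finset.card_erase_of_mem hAe]
  -- auxiliary scan over the children
  have aux : ∀ (ss : List (Symbol T g.NT)) (wss : List (List T)) (k : ℕ), k ≤ m' →
      SDTs g ss wss k →
      (∃ (Bc : g.NT) (a' w' b' : List T), wss.flatten = a' ++ w' ++ b' ∧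
          g.Derives ss (a'.map Symbol.terminal ++ [Symbol.nonterminal Bc] ++
            b'.map Symbol.terminal) ∧
          PumpFound g (Symbol.nonterminal Bc) w')
      ∨ (∃ B ∈ insert r.input F, ∃ (a x b : List T) (n : ℕ), wss.flatten = a ++ x ++ b ∧
          g.Derives ss (a.map Symbol.terminal ++ [Symbol.nonterminal B] ++
            b.map Symbol.terminal) ∧
          SDT g (Symbol.nonterminal B) x n ∧ n ≤ k)
      ∨ wss.flatten.length ≤ ss.length * L ^ (NTS \ insert r.input F).card := by
    intro ss
    induction ss with
    | nil =>
      intro wss k _ h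
      cases h
      right; right; simp
    | cons s ss' ihs =>
      intro wss k hk h
      cases h with
      | @cons _ w₀ n₀ _ ws' k' h0 hs =>
      have hder0 : g.Derives [s] (w₀.map Symbol.terminal) := sdt_derives h0
      have hk' : k' ≤ m' := by omega
      -- shared continuation when the head subtree's yield is bounded
      have step2 : w₀.length ≤ L ^ (NTS \ insert r.input F).card →
          (∃ (Bc : g.NT) (a' w' b' : List T), (w₀ :: ws').flatten = a' ++ w' ++ b' ∧
              g.Derives (s :: ss') (a'.map Symbol.terminal ++ [Symbol.nonterminal Bc] ++
                b'.map Symbol.terminal) ∧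
              PumpFound g (Symbol.nonterminal Bc) w')
          ∨ (∃ B ∈ insert r.input F, ∃ (a x b : List T) (n : ℕ),
              (w₀ :: ws').flatten = a ++ x ++ b ∧
              g.Derives (s :: ss') (a.map Symbol.terminal ++ [Symbol.nonterminal B] ++
                b.map Symbol.terminal) ∧
              SDT g (Symbol.nonterminal B) x n ∧ n ≤ n₀ + k')
          ∨ (w₀ :: ws').flatten.length ≤ (s :: ss').length * L ^ (NTS \ insert r.input F).card := by
        intro hw0
        rcases ihs ws' k' hk' hs with hα | hβ | hγ
        · obtain ⟨Bc, a', w', b', heq, hder, hp⟩ := hα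
          left
          refine ⟨Bc, w₀ ++ a', w', b', by simp [heq], ?_, hp⟩
          have := derives_append hder0 hder
          simpa [List.append_assoc] using this
        · obtain ⟨B, hBF, a, x, b, n, heq, hder, hx, hnk⟩ := hβ
          right; left
          refine ⟨B, hBF, w₀ ++ a, x, b, n, by simp [heq], ?_, hx, by omega⟩
          have := derives_append hder0 hder
          simpa [List.append_assoc] using this
        · right; right
          have : (w₀ :: ws').flatten.length = w₀.length + ws'.flatten.length := by simp
          rw [this]
          have h2 : ws'.flatten.length ≤ ss'.length * L ^ (NTS \ insert r.input F).card := hγ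
          simp only [List.length_cons]
          calc w₀.length + ws'.flatten.length
              ≤ L ^ (NTS \ insert r.input F).card +
                ss'.length * L ^ (NTS \ insert r.input F).card := by omega
            _ = (ss'.length + 1) * L ^ (NTS \ insert r.input F).card := by ring
      cases s with
      | terminal t =>
        apply step2
        cases h0
        simpa using Nat.one_le_pow _ _ (by omega)
      | nonterminal Bc =>
        by_cases hBc : Bc ∈ insert r.input F
        · right; left
          refine ⟨Bc, hBc, [], w₀, ws'.flatten, n₀, by simp, ?_, h0, by omega⟩
          have := derives_append (Derives.refl [Symbol.nonterminal Bc]) (sdts_derives k' hs)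
          simpa [List.append_assoc] using this
        · have hex : ∃ n', SDT g (Symbol.nonterminal Bc) w₀ n' := ⟨n₀, h0⟩
          have hn₁le : Nat.find hex ≤ n₀ := Nat.find_min' hex h0
          have hlt : Nat.find hex < m' + 1 := by omega
          rcases IH (Nat.find hex) hlt Bc w₀ (insert r.input F) (Nat.find_spec hex)
              (fun m'' h'' => Nat.find_min' hex h'') hBc with hp | hrep | hbnd
          · left
            refine ⟨Bc, [], w₀, ws'.flatten, by simp, ?_, hp⟩
            have := derives_append (Derives.refl [Symbol.nonterminal Bc]) (sdts_derives k' hs)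
            simpa [List.append_assoc] using this
          · obtain ⟨B, hBF, a, x, b, n, heq, hre, hx, hn⟩ := hrep
            right; left
            refine ⟨B, hBF, a, x, b ++ ws'.flatten, n, by simp [heq], ?_, hx, by omega⟩
            have := derives_append hre (sdts_derives k' hs)
            simpa [List.append_assoc] using this
          · exact step2 hbnd
  -- use aux on all children
  rcases aux r.output ws m' le_rfl hc with hα | hβ | hγ
  · obtain ⟨Bc, a', w', b', heq, hder, a, v, x, y, b, hw', hvy, hpump⟩ := hα
    left
    refine ⟨a' ++ a, v, x, y, b ++ b', by simp [heq, hw'], hvy, ?_⟩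
    intro i
    have d1 : g.Derives [Symbol.nonterminal r.input]
        (a'.map Symbol.terminal ++ [Symbol.nonterminal Bc] ++ b'.map Symbol.terminal) :=
      Produces.trans_derives ⟨r, hr, ContextFreeRule.Rewrites.input_output⟩ hder
    have d2 := ((hpump i).append_left (a'.map Symbol.terminal)).append_right
        (b'.map Symbol.terminal)
    have := d1.trans (by simpa [List.append_assoc] using d2)
    simpa [List.append_assoc] using this
  · obtain ⟨B, hBF, a, x, b, n, heq, hder, hx, hnk⟩ := hβ
    have hreach : Reach g r.input a B b :=
      Produces.trans_derives ⟨r, hr, ContextFreeRule.Rewrites.input_output⟩ hder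
    rcases Finset.mem_insert.mp hBF with rfl | hBF'
    · by_cases hab : a = [] ∧ b = []
      · obtain ⟨rfl, rfl⟩ := hab
        have : SDT g (Symbol.nonterminal r.input) ws.flatten n := by
          simpa [heq] using hx
        have := hmin n this
        omega
      · left
        have key : ∀ i : ℕ, g.Derives [Symbol.nonterminal r.input]
            ((listPow' a i ++ x ++ listPow' b i).map Symbol.terminal) := by
          intro i
          induction i with
          | zero => simpa [listPow'_zero] using sdt_derives hx
          | succ i ihp =>
            have dmid := (ihp.append_left (a.map Symbol.terminal)).append_right
                (b.map Symbol.terminal)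
            have := hreach.trans (by simpa [List.append_assoc] using dmid)
            simpa [listPow'_succ a, listPow'_succ' b, List.append_assoc] using this
        refine ⟨[], a, x, b, [], by simpa [List.append_assoc] using heq, ?_, ?_⟩
        · intro hnil
          rcases List.append_eq_nil_iff.mp hnil with ⟨ha, hb⟩
          exact hab ⟨ha, hb⟩
        · intro i
          simpa [List.append_assoc] using key i
    · right; left
      exact ⟨B, hBF', a, x, b, n, heq, hreach, hx, by omega⟩
  · right; right
    have h1 : r.output.length ≤ L := le_trans (hlr r hr) (le_max_right 1 lmax)
    obtain ⟨e', he'⟩ : ∃ e', (NTS \ F).card = e' + 1 := ⟨(NTS \ F).card - 1, by omega⟩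
    calc ws.flatten.length ≤ r.output.length * L ^ (NTS \ insert r.input F).card := hγ
      _ ≤ L * L ^ e' := by
          rw [hcard, he']
          exact Nat.mul_le_mul h1 (Nat.pow_le_pow_right (by omega) (by omega))
      _ = L ^ (NTS \ F).card := by rw [he', pow_succ']

end CFPump

namespace CFPump
variable {T : Type}
open ContextFreeGrammar

theorem pumping (g : ContextFreeGrammar.{0} T) :
    ∃ p : ℕ, ∀ w ∈ g.language, p ≤ w.length →
      ∃ a v x y b : List T, w = a ++ v ++ x ++ y ++ b ∧ v ++ y ≠ [] ∧
        ∀ i : ℕ, (a ++ listPow' v i ++ x ++ listPow' y i ++ b) ∈ g.language := by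
  classical
  set lmax := g.rules.sup fun r => r.output.length with hlm
  have hlr : ∀ r ∈ g.rules, r.output.length ≤ lmax := fun r hr => Finset.le_sup (f := fun r => r.output.length) hr
  set NTS := g.rules.image (·.input) with hN
  have hNTS : ∀ r ∈ g.rules, r.input ∈ NTS := fun r hr => Finset.mem_image_of_mem _ hr
  refine ⟨(max 1 lmax) ^ NTS.card + 1, ?_⟩
  intro w hw hlen
  have hd : g.Derives [Symbol.nonterminal g.initial] (w.map Symbol.terminal) :=
    (mem_language_iff g w).mp hw
  obtain ⟨ws, m, hwj, hs⟩ := sdts_of_derives hd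
  cases hs with
  | @cons s w₀ n₀ ss' ws' m' h0 htail =>
  cases htail
  have hw0 : w = w₀ := by simpa using hwj
  subst hw0
  have hex : ∃ n', SDT g (Symbol.nonterminal g.initial) w n' := ⟨n₀, h0⟩
  rcases core lmax hlr NTS hNTS (Nat.find hex) g.initial w ∅ (Nat.find_spec hex)
      (fun m'' h'' => Nat.find_min' hex h'') (Finset.notMem_empty _) with hp | hrep | hbnd
  · obtain ⟨a, v, x, y, b, hdec, hvy, hpump⟩ := hp
    exact ⟨a, v, x, y, b, hdec, hvy, fun i => (mem_language_iff g _).mpr (hpump i)⟩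
  · obtain ⟨B, hB, -⟩ := hrep
    exact absurd hB (Finset.notMem_empty B)
  · rw [Finset.sdiff_empty] at hbnd
    omega

end CFPump

namespace CCF
open CFPump

lemma len_eq_counts (l : List Alph) :
    l.length = l.count Alph.u + l.count Alph.z + l.count Alph.h := by
  induction l with
  | nil => simp
  | cons c l ih => cases c <;> simp [List.count_cons, ih] <;> omega

lemma count_listPow' (c : Alph) (l : List Alph) (i : ℕ) :
    (listPow' l i).count c = i * l.count c := by
  induction i with
  | zero => simp [listPow'_zero]
  | succ i ih => rw [listPow'_succ]; simp [List.count_append, ih]; ring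

lemma sq_le_two_pow : ∀ j : ℕ, 4 ≤ j → j * j ≤ 2 ^ j := by
  intro j hj
  induction j with
  | zero => omega
  | succ j ih =>
    rcases Nat.lt_or_ge j 4 with h4 | h4
    · interval_cases j <;> simp_all <;> omega
    · have := ih (by omega)
      have h2 : 2 ^ (j + 1) = 2 * 2 ^ j := by ring
      nlinarith

lemma exp_escape (a c : ℕ) : ∃ j : ℕ, a + j * c < 2 ^ j := by
  refine ⟨max 4 (a + c + 1), ?_⟩
  set j := max 4 (a + c + 1) with hj
  have h1 : 4 ≤ j := le_max_left _ _
  have h2 : a + c + 1 ≤ j := le_max_right _ _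
  have h3 : j * j ≤ 2 ^ j := sq_le_two_pow j h1
  nlinarith

theorem notCF_Lcc' : ¬ Lcc'.IsContextFree := by
  rintro ⟨g, hg⟩
  obtain ⟨p, hp⟩ := CFPump.pumping g
  set w : List Alph := List.replicate (2 ^ p - 1) Alph.u ++ List.replicate p Alph.z ++ [Alph.h]
    with hwdef
  have hwL : w ∈ g.language := by
    rw [hg]; exact ⟨2 ^ p - 1, p, rfl, le_refl _⟩
  have hlen : p ≤ w.length := by
    simp only [hwdef, List.length_append, List.length_replicate, List.length_singleton]
    omega
  obtain ⟨a, v, x, y, b, hdec, hvy, hpump⟩ := hp w hwL hlen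
  have hmem : ∀ i, (a ++ listPow' v i ++ x ++ listPow' y i ++ b) ∈ Lcc' := by
    intro i; rw [← hg]; exact hpump i
  set Au := a.count Alph.u + x.count Alph.u + b.count Alph.u with hAu
  set Az := a.count Alph.z + x.count Alph.z + b.count Alph.z with hAz
  set Ah := a.count Alph.h + x.count Alph.h + b.count Alph.h with hAh
  set Cu := v.count Alph.u + y.count Alph.u with hCu
  set Cz := v.count Alph.z + y.count Alph.z with hCz
  set Ch := v.count Alph.h + y.count Alph.h with hCh
  have hcnt : ∀ i : ℕ, ∃ n m : ℕ,
      Au + i * Cu = n ∧ Az + i * Cz = m ∧ Ah + i * Ch = 1 ∧ 2 ^ m - 1 ≤ n := by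
    intro i
    obtain ⟨n, m, hsh, hin⟩ := hmem i
    refine ⟨n, m, ?_, ?_, ?_, hin⟩
    · have := congrArg (List.count Alph.u) hsh
      simp [List.count_append, count_listPow', List.count_replicate] at this
      rw [hAu, hCu, Nat.mul_add]
      omega
    · have := congrArg (List.count Alph.z) hsh
      simp [List.count_append, count_listPow', List.count_replicate] at this
      rw [hAz, hCz, Nat.mul_add]
      omega
    · have := congrArg (List.count Alph.h) hsh
      simp [List.count_append, count_listPow', List.count_replicate] at this
      rw [hAh, hCh, Nat.mul_add]
      omega
  -- counts of the original word via the decomposition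
  have hcu : Au + Cu = 2 ^ p - 1 := by
    have := congrArg (List.count Alph.u) hdec
    simp [hwdef, List.count_append, List.count_replicate] at this
    rw [hAu, hCu]
    omega
  have hcz : Az + Cz = p := by
    have := congrArg (List.count Alph.z) hdec
    simp [hwdef, List.count_append, List.count_replicate] at this
    rw [hAz, hCz]
    omega
  have hpos : 1 ≤ Cu + Cz + Ch := by
    have h5 : 1 ≤ v.length + y.length := by
      rcases v with _ | ⟨c, v⟩
      · rcases y with _ | ⟨c, y⟩
        · exact absurd rfl hvy
        · simp only [List.length_cons]; omega
      · simp only [List.length_cons]; omega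
    have e1 := len_eq_counts v
    have e2 := len_eq_counts y
    rw [hCu, hCz, hCh]
    omega
  have hch : Ch = 0 := by
    obtain ⟨n0, m0, _, _, h0, _⟩ := hcnt 0
    obtain ⟨n1, m1, _, _, h1, _⟩ := hcnt 1
    omega
  rcases Nat.eq_zero_or_pos Cz with hcz0 | hcz1
  · -- pumping down kills the u-count
    obtain ⟨n0, m0, hn0, hm0, _, hin0⟩ := hcnt 0
    have hp1 : 1 ≤ 2 ^ p := Nat.one_le_two_pow
    have hm0p : m0 = p := by omega
    rw [hm0p] at hin0
    omega
  · obtain ⟨j, hj⟩ := exp_escape (Au + 1) Cu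
    obtain ⟨nj, mj, hnj, hmj, _, hinj⟩ := hcnt j
    have hjm : j ≤ mj := by
      have : j ≤ j * Cz := Nat.le_mul_of_pos_right j hcz1
      omega
    have hpow : 2 ^ j ≤ 2 ^ mj := Nat.pow_le_pow_right (by norm_num) hjm
    have h1 : 1 ≤ 2 ^ mj := Nat.one_le_two_pow
    omega

end CCF

namespace CFInter
open ContextFreeGrammar CFPump

variable {T : Type} [Fintype T] {Q : Type} [Fintype Q]

def zipT (g : ContextFreeGrammar.{0} T) :
    Q → List (Symbol T g.NT) → List Q → List (Symbol T (Option (Q × Symbol T g.NT × Q)))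
  | p, s :: ss, q :: qs => Symbol.nonterminal (some (p, s, q)) :: zipT g q ss qs
  | _, _, _ => []

def mkRule (g : ContextFreeGrammar.{0} T) (r : ContextFreeRule T g.NT) (p : Q) (qs : List Q) :
    ContextFreeRule T (Option (Q × Symbol T g.NT × Q)) :=
  ⟨some (p, Symbol.nonterminal r.input, qs.getLastD p), zipT g p r.output qs⟩

noncomputable def interG (g : ContextFreeGrammar.{0} T) (M : DFA T Q) :
    ContextFreeGrammar.{0} T := by
  classical
  exact
  { NT := Option (Q × Symbol T g.NT × Q)
    initial := none
    rules :=
      ((Finset.univ.filter (fun q => q ∈ M.accept)).image fun q =>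
        ⟨none, [Symbol.nonterminal (some (M.start, Symbol.nonterminal g.initial, q))]⟩)
      ∪ ((Finset.univ : Finset (Q × T)).image fun pt =>
        ⟨some (pt.1, Symbol.terminal pt.2, M.step pt.1 pt.2), [Symbol.terminal pt.2]⟩)
      ∪ (g.rules.attach.biUnion fun r =>
        (Finset.univ : Finset (Q × (Fin r.1.output.length → Q))).image fun pf =>
          mkRule g r.1 pf.1 (List.ofFn pf.2)) }

lemma ofFn_cast {α : Type*} (l : List α) (k : ℕ) (h : l.length = k) :
    List.ofFn (fun i : Fin k => l.get (Fin.cast h.symm i)) = l := by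
  subst h
  simpa using List.ofFn_get l

lemma mem_rules_iff (g : ContextFreeGrammar.{0} T) (M : DFA T Q)
    {r' : ContextFreeRule T (Option (Q × Symbol T g.NT × Q))} :
    r' ∈ (interG g M).rules ↔
      (∃ q, q ∈ M.accept ∧
        r' = ⟨none, [Symbol.nonterminal (some (M.start, Symbol.nonterminal g.initial, q))]⟩)
      ∨ (∃ p t, r' = ⟨some (p, Symbol.terminal t, M.step p t), [Symbol.terminal t]⟩)
      ∨ (∃ r ∈ g.rules, ∃ p qs, qs.length = r.output.length ∧ r' = mkRule g r p qs) := by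
  classical
  show r' ∈ (Finset.image _ (Finset.filter _ _) ∪ Finset.image _ _ ∪ Finset.biUnion _ _ :
    Finset (ContextFreeRule T (Option (Q × Symbol T g.NT × Q)))) ↔ _
  simp only [interG, Finset.mem_union, Finset.mem_image, Finset.mem_biUnion, Finset.mem_filter,
    Finset.mem_univ, true_and, Finset.mem_attach, Prod.exists]
  constructor
  · rintro ((⟨q, hq, rfl⟩ | ⟨p, t, rfl⟩) | ⟨⟨r, hr⟩, p, f, rfl⟩)
    · exact Or.inl ⟨q, hq, rfl⟩
    · exact Or.inr (Or.inl ⟨p, t, rfl⟩)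
    · exact Or.inr (Or.inr ⟨r, hr, p, List.ofFn f, by simp, rfl⟩)
  · rintro (⟨q, hq, rfl⟩ | ⟨p, t, rfl⟩ | ⟨r, hr, p, qs, hlen, rfl⟩)
    · exact Or.inl (Or.inl ⟨q, hq, rfl⟩)
    · exact Or.inl (Or.inr ⟨p, t, rfl⟩)
    · refine Or.inr ⟨⟨r, hr⟩, p,
        (fun i : Fin r.output.length => qs.get (Fin.cast hlen.symm i)), ?_⟩
      show mkRule g r p (List.ofFn fun i : Fin r.output.length =>
        qs.get (Fin.cast hlen.symm i)) = mkRule g r p qs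
      rw [ofFn_cast qs r.output.length hlen]

def stats (M : DFA T Q) (p : Q) : List (List T) → List Q
  | [] => []
  | w :: ws => M.evalFrom p w :: stats M (M.evalFrom p w) ws

lemma stats_length (M : DFA T Q) : ∀ (p : Q) (ws : List (List T)),
    (stats M p ws).length = ws.length
  | _, [] => rfl
  | p, w :: ws => by simp [stats, stats_length M _ ws]

lemma stats_getLastD (M : DFA T Q) : ∀ (p : Q) (ws : List (List T)),
    (stats M p ws).getLastD p = M.evalFrom p ws.flatten
  | _, [] => rfl
  | p, w :: ws => by
    simp only [stats, List.getLastD_cons, List.flatten_cons]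
    rw [stats_getLastD M _ ws, DFA.evalFrom_of_append]

theorem sound (g : ContextFreeGrammar.{0} T) (M : DFA T Q) :
    ∀ n : ℕ, ∀ (X : Option (Q × Symbol T g.NT × Q)) (w : List T),
    SDT (interG g M) (Symbol.nonterminal X) w n →
    (X = none → w ∈ g.language ∧ w ∈ M.accepts) ∧
    (∀ p s q, X = some (p, s, q) →
      g.Derives [s] (w.map Symbol.terminal) ∧ M.evalFrom p w = q) := by
  intro n
  induction n using Nat.strong_induction_on with
  | _ n IH =>
  intro X w hT
  cases hT with
  | @node r' hr' ws m hc =>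
  rcases (mem_rules_iff g M).mp hr' with ⟨q, hq, rfl⟩ | ⟨p, t, rfl⟩ | ⟨r, hr, p0, qs, hlen, rfl⟩
  · -- start rule
    cases hc with
    | @cons _ w₀ n₀ _ ws' m' h0 hs =>
    change SDTs (interG g M) ([] : List (Symbol T (interG g M).NT)) ws' m' at hs
    cases hs
    have := (IH n₀ (by omega) _ w₀ h0).2 M.start (Symbol.nonterminal g.initial) q rfl
    constructor
    · intro _
      refine ⟨(mem_language_iff g _).mpr (by simpa using this.1), ?_⟩
      have : M.evalFrom M.start (List.flatten [w₀]) ∈ M.accept := by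
        simpa using this.2 ▸ hq
      simpa [DFA.mem_accepts, DFA.eval] using this
    · intro p s qq hcontra
      exact absurd hcontra (by simp)
  · -- terminal rule
    cases hc with
    | @cons _ w₀ n₀ _ ws' m' h0 hs =>
    change SDTs (interG g M) ([] : List (Symbol T (interG g M).NT)) ws' m' at hs
    cases hs
    change SDT (interG g M) (Symbol.terminal t : Symbol T (interG g M).NT) w₀ n₀ at h0
    cases h0
    constructor
    · intro hcontra
      exact absurd hcontra (by simp)
    · rintro p' s' q' heq
      obtain ⟨rfl, rfl, rfl⟩ : p' = p ∧ s' = Symbol.terminal t ∧ q' = M.step p t := by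
        simpa using heq.symm
      exact ⟨by simpa using Derives.refl [Symbol.terminal t], by simp⟩
  · -- lifted rule
    have aux : ∀ (ss : List (Symbol T g.NT)) (qs : List Q) (p : Q) (wss : List (List T)) (k : ℕ),
        k ≤ m → qs.length = ss.length → SDTs (interG g M) (zipT g p ss qs) wss k →
        g.Derives ss (wss.flatten.map Symbol.terminal) ∧
          M.evalFrom p wss.flatten = qs.getLastD p := by
      intro ss
      induction ss with
      | nil =>
        rintro ⟨⟩ p wss k hk hql h
        · change SDTs (interG g M) ([] : List (Symbol T (interG g M).NT)) wss k at h
          cases h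
          exact ⟨Derives.refl _, rfl⟩
        · simp at hql
      | cons s ss' ihs =>
        rintro ⟨⟩ p wss k hk hql h
        · simp at hql
        · rename_i q₀ qs'
          rw [zipT] at h
          change SDTs (interG g M) (Symbol.nonterminal (some (p, s, q₀)) :: zipT g q₀ ss' qs' :
            List (Symbol T (interG g M).NT)) wss k at h
          cases h with
          | @cons _ w₀ n₀ _ ws' k' h0 hs =>
          have hhead := (IH n₀ (by omega) _ w₀ h0).2 p s q₀ rfl
          have hrest := ihs qs' q₀ ws' k' (by omega) (by simpa using hql) hs
          refine ⟨?_, ?_⟩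
          · have := derives_append hhead.1 hrest.1
            simpa using this
          · have hj : (w₀ :: ws').flatten = w₀ ++ ws'.flatten := rfl
            rw [hj, DFA.evalFrom_of_append, hhead.2, hrest.2, List.getLastD_cons]
    constructor
    · intro hcontra
      exact absurd hcontra (by simp [mkRule])
    · rintro p' s' q' heq
      obtain ⟨rfl, rfl, rfl⟩ :
          p' = p0 ∧ s' = Symbol.nonterminal r.input ∧ q' = qs.getLastD p0 := by
        simpa [mkRule] using heq.symm
      obtain ⟨hd, he⟩ := aux r.output qs p' ws m le_rfl (by simpa [mkRule] using hlen) hc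
      exact ⟨Produces.trans_derives ⟨r, hr, ContextFreeRule.Rewrites.input_output⟩ hd, he⟩

theorem complete (g : ContextFreeGrammar.{0} T) (M : DFA T Q) :
    ∀ n : ℕ, ∀ (s : Symbol T g.NT) (w : List T), SDT g s w n → ∀ p : Q,
    (interG g M).Derives [Symbol.nonterminal (some (p, s, M.evalFrom p w))]
      (w.map Symbol.terminal) := by
  intro n
  induction n using Nat.strong_induction_on with
  | _ n IH =>
  intro s w hT p
  cases hT with
  | term t =>
    have hmem : (⟨some (p, Symbol.terminal t, M.step p t), [Symbol.terminal t]⟩ :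
        ContextFreeRule T (Option (Q × Symbol T g.NT × Q))) ∈ (interG g M).rules :=
      (mem_rules_iff g M).mpr (Or.inr (Or.inl ⟨p, t, rfl⟩))
    have : M.evalFrom p [t] = M.step p t := by simp
    rw [this]
    exact Produces.single ⟨_, hmem, ContextFreeRule.Rewrites.input_output⟩
  | @node r hr ws m hc =>
    have hwlen : ws.length = r.output.length := SDTs_len hc
    have hmem : mkRule g r p (stats M p ws) ∈ (interG g M).rules :=
      (mem_rules_iff g M).mpr (Or.inr (Or.inr ⟨r, hr, p, stats M p ws,
        by rw [stats_length, hwlen], rfl⟩))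
    have aux : ∀ (ss : List (Symbol T g.NT)) (wss : List (List T)) (k : ℕ),
        k ≤ m → SDTs g ss wss k → ∀ p : Q,
        (interG g M).Derives (zipT g p ss (stats M p wss)) (wss.flatten.map Symbol.terminal) := by
      intro ss
      induction ss with
      | nil =>
        intro wss k hk h pp
        cases h
        exact Derives.refl _
      | cons s' ss' ihs =>
        intro wss k hk h pp
        cases h with
        | @cons _ w₀ n₀ _ ws' k' h0 hs =>
        rw [stats, zipT]
        have hhead := IH n₀ (by omega) s' w₀ h0 pp
        have hrest := ihs ws' k' (by omega) hs (M.evalFrom pp w₀)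
        have := derives_append hhead hrest
        rw [List.flatten_cons, List.map_append]
        exact this
    have hlast : (stats M p ws).getLastD p = M.evalFrom p ws.flatten := stats_getLastD M p ws
    rw [← hlast]
    exact Produces.trans_derives ⟨_, hmem, ContextFreeRule.Rewrites.input_output⟩
      (aux r.output ws m le_rfl hc p)

theorem interG_language (g : ContextFreeGrammar.{0} T) (M : DFA T Q) :
    (interG g M).language = g.language ⊓ M.accepts := by
  ext w
  constructor
  · intro hw
    have hd := (mem_language_iff _ w).mp hw
    obtain ⟨ws, m, hwj, hs⟩ := sdts_of_derives hd
    cases hs with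
    | @cons _ w₀ n₀ _ ws' m' h0 hs' =>
    cases hs'
    have hw0 : w = w₀ := by simpa using hwj
    subst hw0
    exact (sound g M n₀ none w h0).1 rfl
  · rintro ⟨hwL, hwR⟩
    obtain ⟨ws, m, hwj, hs⟩ := sdts_of_derives ((mem_language_iff g w).mp hwL)
    cases hs with
    | @cons _ w₀ n₀ _ ws' m' h0 hs' =>
    cases hs'
    have hw0 : w = w₀ := by simpa using hwj
    subst hw0
    have hq : M.evalFrom M.start w ∈ M.accept := by
      exact hwR
    have hstart : (⟨none, [Symbol.nonterminal
        (some (M.start, Symbol.nonterminal g.initial, M.evalFrom M.start w))]⟩ :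
        ContextFreeRule T (Option (Q × Symbol T g.NT × Q))) ∈ (interG g M).rules :=
      (mem_rules_iff g M).mpr (Or.inl ⟨M.evalFrom M.start w, hq, rfl⟩)
    refine (mem_language_iff _ w).mpr ?_
    exact Produces.trans_derives ⟨_, hstart, ContextFreeRule.Rewrites.input_output⟩
      (complete g M n₀ _ w h0 M.start)

theorem inter_isCF {L R : Language T} (hL : L.IsContextFree) (hR : R.IsRegular) :
    (L ⊓ R).IsContextFree := by
  obtain ⟨g, rfl⟩ := hL
  obtain ⟨Q, fQ, M, rfl⟩ := hR
  letI := fQ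
  exact ⟨interG g M, interG_language g M⟩

end CFInter

instance : Fintype Alph := ⟨{Alph.u, Alph.z, Alph.h}, fun x => by cases x <;> simp⟩

namespace LREG

inductive St : Type
  | s0 | s1 | s2 | dead
deriving DecidableEq

instance : Fintype St := ⟨{St.s0, St.s1, St.s2, St.dead}, fun x => by cases x <;> simp⟩

def MD : DFA Alph St where
  step s a :=
    match s, a with
    | St.s0, Alph.u => St.s0
    | St.s0, Alph.z => St.s1
    | St.s0, Alph.h => St.s2
    | St.s1, Alph.z => St.s1
    | St.s1, Alph.h => St.s2
    | _, _ => St.dead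
  start := St.s0
  accept := {St.s2}

lemma evalFrom_cons (M : DFA Alph St) (st : St) (a : Alph) (l : List Alph) :
    M.evalFrom st (a :: l) = M.evalFrom (M.step st a) l := rfl

lemma ev_z1 : ∀ m, MD.evalFrom St.s1 (List.replicate m Alph.z ++ [Alph.h]) = St.s2 := by
  intro m
  induction m with
  | zero => rfl
  | succ m ih => rw [List.replicate_succ, List.cons_append, evalFrom_cons]; exact ih

lemma ev_z0 : ∀ m, MD.evalFrom St.s0 (List.replicate m Alph.z ++ [Alph.h]) = St.s2 := by
  intro m
  cases m with
  | zero => rfl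
  | succ m => rw [List.replicate_succ, List.cons_append, evalFrom_cons]; exact ev_z1 m

lemma ev_u : ∀ n, MD.evalFrom St.s0 (List.replicate n Alph.u) = St.s0 := by
  intro n
  induction n with
  | zero => rfl
  | succ n ih => rw [List.replicate_succ, evalFrom_cons]; exact ih

lemma inv : ∀ w : List Alph,
    (MD.evalFrom St.s0 w = St.s0 → ∃ n, w = List.replicate n Alph.u) ∧
    (MD.evalFrom St.s0 w = St.s1 →
      ∃ n m, w = List.replicate n Alph.u ++ List.replicate m Alph.z) ∧
    (MD.evalFrom St.s0 w = St.s2 → w ∈ Lu0h) := by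
  intro w
  induction w using List.reverseRecOn with
  | nil =>
    exact ⟨fun _ => ⟨0, rfl⟩, fun h => absurd h (by decide), fun h => absurd h (by decide)⟩
  | append_singleton w a ih =>
    obtain ⟨ih0, ih1, ih2⟩ := ih
    rcases hsw : MD.evalFrom St.s0 w with _ | _ | _ | _
    · -- state s0
      obtain ⟨n, rfl⟩ := ih0 hsw
      refine ⟨?_, ?_, ?_⟩ <;> intro h <;>
        rw [DFA.evalFrom_append_singleton, hsw] at h <;> cases a
      · exact ⟨n + 1, by rw [List.replicate_succ']⟩
      · exact absurd h (by decide)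
      · exact absurd h (by decide)
      · exact absurd h (by decide)
      · exact ⟨n, 1, by simp⟩
      · exact absurd h (by decide)
      · exact absurd h (by decide)
      · exact absurd h (by decide)
      · exact ⟨n, 0, by simp⟩
    · -- state s1
      obtain ⟨n, m, rfl⟩ := ih1 hsw
      refine ⟨?_, ?_, ?_⟩ <;> intro h <;>
        rw [DFA.evalFrom_append_singleton, hsw] at h <;> cases a
      · exact absurd h (by decide)
      · exact absurd h (by decide)
      · exact absurd h (by decide)
      · exact absurd h (by decide)
      · exact ⟨n, m + 1, by rw [List.replicate_succ' (n := m), ← List.append_assoc]⟩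
      · exact absurd h (by decide)
      · exact absurd h (by decide)
      · exact absurd h (by decide)
      · exact ⟨n, m, rfl⟩
    · -- state s2
      refine ⟨?_, ?_, ?_⟩ <;> intro h <;>
        rw [DFA.evalFrom_append_singleton, hsw] at h <;> cases a <;>
        exact absurd h (by decide)
    · -- dead
      refine ⟨?_, ?_, ?_⟩ <;> intro h <;>
        rw [DFA.evalFrom_append_singleton, hsw] at h <;> cases a <;>
        exact absurd h (by decide)

theorem Lu0h_regular : Lu0h.IsRegular := by
  refine ⟨St, inferInstance, MD, ?_⟩
  ext w
  constructor
  · intro hw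
    have h2 : MD.evalFrom St.s0 w = St.s2 := by
      simpa [DFA.mem_accepts, DFA.eval, MD] using hw
    exact (inv w).2.2 h2
  · rintro ⟨n, m, rfl⟩
    show _ ∈ MD.accepts
    rw [DFA.mem_accepts]
    show MD.evalFrom MD.start _ ∈ MD.accept
    rw [List.append_assoc, DFA.evalFrom_of_append]
    show MD.evalFrom (MD.evalFrom St.s0 (List.replicate n Alph.u)) _ ∈ ({St.s2} : Set St)
    rw [ev_u n, ev_z0 m]
    simp

end LREG

/-- closure of CF under intersection with regular languages yields a
contradiction if L ⊓ R is not CF; consequently any L with L ⊓ { u^n 0^m h } = L'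
is not context-free. -/
theorem not_contextFree_of_inter :
    (∀ L R : Language Alph, L.IsContextFree → R.IsRegular →
        ¬ (L ⊓ R).IsContextFree → False) ∧
    (∀ L : Language Alph, L ⊓ Lu0h = Lcc' → ¬ L.IsContextFree) := by
  constructor
  · intro L R hL hR hnot
    exact hnot (CFInter.inter_isCF hL hR)
  · intro L hLR hCF
    have h := CFInter.inter_isCF hCF LREG.Lu0h_regular
    rw [hLR] at h
    exact CCF.notCF_Lcc' h
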